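/- Let C be a symmetric monoidal category with discarding, zero morphisms, and normalisation (every non-zero state ρ factors as σ ∘ r for a unique causal state σ and scalar r). Then pure states are closed under normalisation: if ψ is a non-zero pure state with normalisation φ, then φ is pure. -/

import Mathlib

open CategoryTheory MonoidalCategory Limits

variable {C : Type*} [Category C] [MonoidalCategory C] [SymmetricCategory C]

/-- A state (or morphism into `A`) is causal when discarding it gives the
identity scalar. -/
def Causal (top : ∀ A : C, A ⟶ 𝟙_ C) {A : C} (σ : 𝟙_ C ⟶ A) : Prop :=
  σ ≫ top A = 𝟙 (𝟙_ C)

/-- A state `ψ : I ⟶ A` is pure when `ψ = 0` or every dilation `ρ : I ⟶ A ⊗ E`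
of `ψ` is of the form `ψ ⊗ₘ σ` (modulo the unitor) for some causal state `σ`. -/
def IsPureState [HasZeroMorphisms C] (top : ∀ A : C, A ⟶ 𝟙_ C) {A : C}
    (ψ : 𝟙_ C ⟶ A) : Prop :=
  ψ = 0 ∨ ∀ (E : C) (ρ : 𝟙_ C ⟶ A ⊗ E), ρ ≫ (𝟙 A ⊗ₘ top E) ≫ (ρ_ A).hom = ψ →
    ∃ σ : 𝟙_ C ⟶ E, Causal top σ ∧ ρ = (λ_ (𝟙_ C)).inv ≫ (ψ ⊗ₘ σ)

/-- Normalisation: every non-zero state factors as a scalar followed by a unique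
causal state. -/
def Normalisation [HasZeroMorphisms C] (top : ∀ A : C, A ⟶ 𝟙_ C) : Prop :=
  ∀ {A : C} (ρ : 𝟙_ C ⟶ A), ρ ≠ 0 →
    ∃ (r : 𝟙_ C ⟶ 𝟙_ C) (σ : 𝟙_ C ⟶ A), Causal top σ ∧ ρ = r ≫ σ ∧
      ∀ (r' : 𝟙_ C ⟶ 𝟙_ C) (σ' : 𝟙_ C ⟶ A), Causal top σ' → ρ = r' ≫ σ' → σ' = σ

/-- In a symmetric monoidal category with discarding, zero
morphisms and normalisation, pure states are closed under normalisation: the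
normalisation of a non-zero pure state is pure. -/
theorem stmt_10 [HasZeroMorphisms C] (top : ∀ A : C, A ⟶ 𝟙_ C)
    (htop_tensor : ∀ A B : C, top (A ⊗ B) = (top A ⊗ₘ top B) ≫ (λ_ (𝟙_ C)).hom)
    (htop_unit : top (𝟙_ C) = 𝟙 (𝟙_ C))
    (hnorm : Normalisation top)
    {A : C} (ψ φ : 𝟙_ C ⟶ A) (hψ : ψ ≠ 0) (hpure : IsPureState top ψ)
    (hφ : Causal top φ) (hfac : ∃ r : 𝟙_ C ⟶ 𝟙_ C, ψ = r ≫ φ) :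
    IsPureState top φ := by
  obtain ⟨r, hr⟩ := hfac
  right
  intro E ρ hρ
  -- any dilation is causal
  have hkey : ∀ (θ : 𝟙_ C ⟶ A ⊗ E),
      θ ≫ top (A ⊗ E) = (θ ≫ (𝟙 A ⊗ₘ top E) ≫ (ρ_ A).hom) ≫ top A := by
    intro θ
    rw [htop_tensor]
    have h1 : (top A ⊗ₘ top E) = (𝟙 A ⊗ₘ top E) ≫ (top A ⊗ₘ 𝟙 (𝟙_ C)) := by
      rw [tensorHom_comp_tensorHom]; simp
    have h2 : (top A ⊗ₘ 𝟙 (𝟙_ C)) ≫ (λ_ (𝟙_ C)).hom = (ρ_ A).hom ≫ top A := by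
      rw [unitors_equal, tensorHom_id, rightUnitor_naturality]
    rw [h1]
    simp only [Category.assoc, h2]
  have hρc : Causal top ρ := by
    unfold Causal
    rw [hkey ρ, hρ, hφ]
  -- r ≫ ρ is a dilation of ψ
  have hdil : (r ≫ ρ) ≫ (𝟙 A ⊗ₘ top E) ≫ (ρ_ A).hom = ψ := by
    rw [Category.assoc, hρ, hr]
  have hne : r ≫ ρ ≠ 0 := by
    intro h0
    apply hψ
    rw [← hdil, h0, zero_comp]
  obtain ⟨σ, hσc, hσ⟩ := (hpure.resolve_left hψ) E (r ≫ ρ) hdil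
  -- the candidate τ
  set τ : 𝟙_ C ⟶ A ⊗ E := (λ_ (𝟙_ C)).inv ≫ (φ ⊗ₘ σ) with hτ
  have hτc : Causal top τ := by
    unfold Causal
    rw [hτ, Category.assoc, htop_tensor, ← Category.assoc (φ ⊗ₘ σ), tensorHom_comp_tensorHom,
      hφ, hσc, id_tensorHom_id, Category.id_comp, Iso.inv_hom_id]
  have hscal : (λ_ (𝟙_ C)).inv ≫ (r ⊗ₘ 𝟙 (𝟙_ C)) = r ≫ (λ_ (𝟙_ C)).inv := by
    rw [unitors_inv_equal, tensorHom_id, ← rightUnitor_inv_naturality]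
  have hfacτ : r ≫ ρ = r ≫ τ := by
    rw [hσ, hτ, hr]
    rw [show (r ≫ φ) ⊗ₘ σ = (r ⊗ₘ 𝟙 (𝟙_ C)) ≫ (φ ⊗ₘ σ) by rw [tensorHom_comp_tensorHom]; simp]
    rw [← Category.assoc, hscal, Category.assoc]
  obtain ⟨r₀, σ₀, hc₀, hf₀, huniq⟩ := hnorm (r ≫ ρ) hne
  have h1 : ρ = σ₀ := huniq r ρ hρc rfl
  have h2 : τ = σ₀ := huniq r τ hτc hfacτ
  exact ⟨σ, hσc, by rw [h1, ← h2]⟩
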